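/- If Ā and B̄ are symmetric positive definite matrices and ξ ∈ ℝⁿ satisfy ⟨Āξ,ξ⟩ ≥ ⟨B̄^{-1}Āξ, Āξ⟩ and ⟨B̄ξ,ξ⟩ ≥ ⟨Ā^{-1}B̄ξ, B̄ξ⟩, then Āξ = B̄ξ. -/

import Mathlib

open Matrix

lemma herm_dot_symm {n : ℕ} {M : Matrix (Fin n) (Fin n) ℝ} (hM : M.IsHermitian)
    (x y : Fin n → ℝ) : x ⬝ᵥ M.mulVec y = y ⬝ᵥ M.mulVec x := by
  rw [dotProduct_mulVec, ← mulVec_transpose]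
  have : Mᵀ = M := hM
  rw [this, dotProduct_comm]

/-- Proposition 5.1(ii): if both `Ā` and `B̄` (symmetric positive definite) satisfy the
pointwise variational inequalities `⟨Āξ,ξ⟩ ≥ ⟨B̄⁻¹Āξ,Āξ⟩` and `⟨B̄ξ,ξ⟩ ≥ ⟨Ā⁻¹B̄ξ,B̄ξ⟩`,
then `Āξ = B̄ξ`. -/
theorem var_ineq_unique_image {n : ℕ} (Abar Bbar : Matrix (Fin n) (Fin n) ℝ)
    (hA : Abar.PosDef) (hB : Bbar.PosDef) (ξ : Fin n → ℝ)
    (h1 : Bbar⁻¹.mulVec (Abar.mulVec ξ) ⬝ᵥ Abar.mulVec ξ ≤ Abar.mulVec ξ ⬝ᵥ ξ)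
    (h2 : Abar⁻¹.mulVec (Bbar.mulVec ξ) ⬝ᵥ Bbar.mulVec ξ ≤ Bbar.mulVec ξ ⬝ᵥ ξ) :
    Abar.mulVec ξ = Bbar.mulVec ξ := by
  set a := Abar.mulVec ξ with ha
  set b := Bbar.mulVec ξ with hb
  have hAd : IsUnit Abar.det := hA.det_pos.ne'.isUnit
  have hBd : IsUnit Bbar.det := hB.det_pos.ne'.isUnit
  have hAinv : Abar⁻¹.mulVec a = ξ := by
    rw [ha, mulVec_mulVec, nonsing_inv_mul _ hAd, one_mulVec]
  have hBinv : Bbar⁻¹.mulVec b = ξ := by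
    rw [hb, mulVec_mulVec, nonsing_inv_mul _ hBd, one_mulVec]
  have hAi := hA.inv
  have hBi := hB.inv
  -- expand quadratic forms
  have symB := herm_dot_symm hBi.isHermitian
  have symA := herm_dot_symm hAi.isHermitian
  have qB : (a - b) ⬝ᵥ Bbar⁻¹.mulVec (a - b)
      = a ⬝ᵥ Bbar⁻¹.mulVec a - 2 * (a ⬝ᵥ ξ) + b ⬝ᵥ ξ := by
    rw [mulVec_sub, dotProduct_sub, sub_dotProduct, sub_dotProduct]
    rw [symB b a, hBinv]
    ring
  have qA : (b - a) ⬝ᵥ Abar⁻¹.mulVec (b - a)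
      = b ⬝ᵥ Abar⁻¹.mulVec b - 2 * (b ⬝ᵥ ξ) + a ⬝ᵥ ξ := by
    rw [mulVec_sub, dotProduct_sub, sub_dotProduct, sub_dotProduct]
    rw [symA a b, hAinv]
    ring
  have h1' : a ⬝ᵥ Bbar⁻¹.mulVec a ≤ a ⬝ᵥ ξ := by
    rw [dotProduct_comm]; exact h1
  have h2' : b ⬝ᵥ Abar⁻¹.mulVec b ≤ b ⬝ᵥ ξ := by
    rw [dotProduct_comm]; exact h2
  by_contra hne
  have hc : a - b ≠ 0 := sub_ne_zero.mpr hne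
  have posB : 0 < (a - b) ⬝ᵥ Bbar⁻¹.mulVec (a - b) := by
    have := hBi.dotProduct_mulVec_pos (x := a - b) hc
    simpa using this
  have posA : 0 < (b - a) ⬝ᵥ Abar⁻¹.mulVec (b - a) := by
    have := hAi.dotProduct_mulVec_pos (x := b - a) (fun h => hc (by rw [← neg_sub] at h; simpa using neg_eq_zero.mp h))
    simpa using this
  linarith
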